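/- (Example 4.3: person-by-person optimality without stationarity in the static reduction.) Consider the cost c(ω₂, u¹, u²) = (√u¹ − u² + ω₂)² with DM1's action u¹ ∈ [0,∞). Then: (a) the static policy γ₁* ≡ 0, δ₂*(y, s) = s is person-by-person optimal for (P^S): J^S(γ₁*, δ₂*) = 0; for every measurable γ₁ : ℝ → [0,∞) the integrand of J^S(γ₁, δ₂*) equals γ₁(ω₁) pointwise, hence J^S(γ₁, δ₂*) ≥ 0; and for every measurable δ₂ : ℝ × ℝ → ℝ the integrand of J^S(γ₁*, δ₂) equals (ω₂ − δ₂(ω₁, ω₂))² pointwise, hence J^S(γ₁*, δ₂) ≥ 0. (b) Nevertheless, the DM1-reduced cost function t ↦ J^S(t, δ₂*) (constant DM1 policies) equals the identity function t ↦ t on [0,∞); in particular its derivative equals 1 at every t > 0, so the stationarity (first-order) condition for DM1 has no solution and (γ₁*, δ₂*) is not a stationary policy for (P^S). -/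

import Mathlib

open MeasureTheory
open scoped ENNReal

/-- **Example 4.3: person-by-person optimality without stationarity in the static
reduction.** For the cost `c (ω₂, u¹, u²) = (√u¹ − u² + ω₂)²` with DM1's action in
`[0,∞)`: (a) the static policy `γ₁* ≡ 0`, `δ₂* (y, s) = s` is person-by-person optimal
for `(P^S)`; (b) nevertheless the DM1-reduced cost `t ↦ J^S(t, δ₂*)` equals the identity
on `[0,∞)`, its derivative is `1` at every `t > 0`, and hence the first-order
(stationarity) condition for DM1 has no solution. -/
theorem example43_pbp_without_stationarity
    {Ω : Type*} [MeasurableSpace Ω] (P : Measure Ω) [IsProbabilityMeasure P]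
    (ω₁ ω₂ : Ω → ℝ) (hω₁ : Measurable ω₁) (hω₂ : Measurable ω₂)
    (c : ℝ → ℝ → ℝ → ℝ)
    (hc : ∀ w u₁ u₂, c w u₁ u₂ = (Real.sqrt u₁ - u₂ + w) ^ 2)
    (JS : (ℝ → ℝ) → (ℝ × ℝ → ℝ) → ℝ≥0∞)
    (hJS : ∀ γ₁ δ₂, JS γ₁ δ₂
      = ∫⁻ ω, ENNReal.ofReal (c (ω₂ ω) (γ₁ (ω₁ ω)) (δ₂ (ω₁ ω, ω₂ ω))) ∂P) :
    -- (a): person-by-person optimality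
    (JS (fun _ => 0) (fun p => p.2) = 0)
    ∧ (∀ γ₁ : ℝ → ℝ, Measurable γ₁ → (∀ x, 0 ≤ γ₁ x) →
        (∀ ω, c (ω₂ ω) (γ₁ (ω₁ ω)) (ω₂ ω) = γ₁ (ω₁ ω))
        ∧ JS (fun _ => 0) (fun p => p.2) ≤ JS γ₁ (fun p => p.2))
    ∧ (∀ δ₂ : ℝ × ℝ → ℝ, Measurable δ₂ →
        (∀ ω, c (ω₂ ω) 0 (δ₂ (ω₁ ω, ω₂ ω)) = (ω₂ ω - δ₂ (ω₁ ω, ω₂ ω)) ^ 2)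
        ∧ JS (fun _ => 0) (fun p => p.2) ≤ JS (fun _ => 0) δ₂)
    -- (b): the DM1-reduced cost is the identity on [0,∞) and is never stationary
    ∧ (∀ t : ℝ, 0 ≤ t → (JS (fun _ => t) (fun p => p.2)).toReal = t)
    ∧ (∀ t : ℝ, 0 < t →
        HasDerivAt (fun s : ℝ => (JS (fun _ => s) (fun p => p.2)).toReal) 1 t)
    ∧ ¬ ∃ t : ℝ, 0 < t ∧
        deriv (fun s : ℝ => (JS (fun _ => s) (fun p => p.2)).toReal) t = 0 := by

  have key : ∀ s : ℝ, JS (fun _ => s) (fun p => p.2) = ENNReal.ofReal (Real.sqrt s ^ 2) := by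
    intro s
    rw [hJS]
    have : ∀ ω : Ω, c (ω₂ ω) s (ω₂ ω) = Real.sqrt s ^ 2 := by
      intro ω; rw [hc]; ring
    simp only [this, lintegral_const, measure_univ, mul_one]
  have hzero : JS (fun _ => 0) (fun p => p.2) = 0 := by
    rw [key]; simp
  refine ⟨hzero, ?_, ?_, ?_, ?_, ?_⟩
  · intro γ₁ _ hpos
    refine ⟨fun ω => by rw [hc, sub_add_cancel, Real.sq_sqrt (hpos _)], ?_⟩
    rw [hzero]; exact zero_le
  · intro δ₂ _
    refine ⟨fun ω => by rw [hc]; rw [Real.sqrt_zero]; ring, ?_⟩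
    rw [hzero]; exact zero_le
  · intro t ht
    rw [key, ENNReal.toReal_ofReal (by positivity), Real.sq_sqrt ht]
  · intro t ht
    have heq : ∀ᶠ s in nhds t, (JS (fun _ => s) (fun p => p.2)).toReal = id s := by
      filter_upwards [eventually_gt_nhds ht] with s hs
      rw [key, ENNReal.toReal_ofReal (by positivity), Real.sq_sqrt hs.le, id]
    exact (hasDerivAt_id t).congr_of_eventuallyEq heq
  · rintro ⟨t, ht, hd⟩
    have h1 : HasDerivAt (fun s : ℝ => (JS (fun _ => s) (fun p => p.2)).toReal) 1 t := by
      have heq : ∀ᶠ s in nhds t, (JS (fun _ => s) (fun p => p.2)).toReal = id s := by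
        filter_upwards [eventually_gt_nhds ht] with s hs
        rw [key, ENNReal.toReal_ofReal (by positivity), Real.sq_sqrt hs.le, id]
      exact (hasDerivAt_id t).congr_of_eventuallyEq heq
    rw [h1.deriv] at hd
    exact one_ne_zero hd
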